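/- Let (Γ, 𝔞, θ, δ, f) be a Γ-Lie bialgebra, i.e., (𝔞, δ) is a Lie bialgebra, θ : Γ → Aut(𝔞) is a group action by Lie algebra automorphisms, and f : Γ → Λ²𝔞 satisfies: (a) Λ²(θ_γ) ∘ δ ∘ θ_γ⁻¹ = δ + ad(f_γ) for all γ; (b) f_{γγ'} = f_γ + Λ²(θ_γ)(f_{γ'}); (c) each f_γ satisfies the twist equation. Then for all γ, γ' ∈ Γ, the pair (f_γ, Λ²(θ_γ)(f_{γ'})) is a composition of twists: f_γ is a twist of 𝔞, and Λ²(θ_γ)(f_{γ'}) is a twist of 𝔞_{f_γ}. -/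

import Mathlib

open TensorProduct

variable (k : Type) [Field k] (a : Type) [LieRing a] [LieAlgebra k a]

/-- The Lie bracket of `a` as a bilinear map. -/
noncomputable def br2 : a →ₗ[k] a →ₗ[k] a :=
  LinearMap.mk₂ k (fun x y => ⁅x, y⁆) add_lie smul_lie lie_add lie_smul

/-- The Lie bracket as a linear map on the tensor square. -/
noncomputable def brL : a ⊗[k] a →ₗ[k] a := TensorProduct.lift (br2 k a)

/-- The adjoint action of `a` on `a ⊗ a`: `act x (u ⊗ v) = ⁅x,u⁆ ⊗ v + u ⊗ ⁅x,v⁆`,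
which equals `[x ⊗ 1 + 1 ⊗ x, u ⊗ v]` in `U(a) ⊗ U(a)`. -/
noncomputable def act : a →ₗ[k] (a ⊗[k] a →ₗ[k] a ⊗[k] a) where
  toFun x := TensorProduct.map (br2 k a x) LinearMap.id + TensorProduct.map LinearMap.id (br2 k a x)
  map_add' x y := by
    ext u v
    simp [br2, add_lie, TensorProduct.tmul_add, TensorProduct.add_tmul]
    abel
  map_smul' c x := by
    ext u v
    simp [br2, smul_lie, TensorProduct.tmul_add, TensorProduct.smul_tmul', TensorProduct.tmul_smul,
      smul_add]

/-- `adL f` is the map `x ↦ [f, x ⊗ 1 + 1 ⊗ x]`. -/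
noncomputable def adL (f : a ⊗[k] a) : a →ₗ[k] a ⊗[k] a := -((act k a).flip f)

/-- Cyclic permutation `x ⊗ y ⊗ z ↦ y ⊗ z ⊗ x` on the triple tensor product. -/
noncomputable def cyc : a ⊗[k] (a ⊗[k] a) →ₗ[k] a ⊗[k] (a ⊗[k] a) :=
  (TensorProduct.congr (LinearEquiv.refl k a) (TensorProduct.comm k a a)).toLinearMap ∘ₗ
    (TensorProduct.leftComm k a a a).toLinearMap

/-- Sum over cyclic permutations. -/
noncomputable def cycSum (w : a ⊗[k] (a ⊗[k] a)) : a ⊗[k] (a ⊗[k] a) :=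
  w + cyc k a w + cyc k a (cyc k a w)

/-- `(d ⊗ id)` on the tensor square, landing in the triple tensor product. -/
noncomputable def d13 (d : a →ₗ[k] a ⊗[k] a) : a ⊗[k] a →ₗ[k] a ⊗[k] (a ⊗[k] a) :=
  (TensorProduct.assoc k a a a).toLinearMap ∘ₗ TensorProduct.map d LinearMap.id

/-- `(f, g) ↦ [f^{13}, g^{23}]`: on pure tensors `(x ⊗ y, u ⊗ v) ↦ x ⊗ u ⊗ ⁅y,v⁆`. -/
noncomputable def C13_23 : (a ⊗[k] a) ⊗[k] (a ⊗[k] a) →ₗ[k] a ⊗[k] (a ⊗[k] a) :=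
  (TensorProduct.map LinearMap.id (TensorProduct.map LinearMap.id (brL k a))) ∘ₗ
    (TensorProduct.congr (LinearEquiv.refl k a) (TensorProduct.leftComm k a a a)).toLinearMap ∘ₗ
    (TensorProduct.assoc k a a (a ⊗[k] a)).toLinearMap

/-- `(f, g) ↦ [f^{12}, g^{13}]`: on pure tensors `(x ⊗ y, u ⊗ v) ↦ ⁅x,u⁆ ⊗ y ⊗ v`. -/
noncomputable def C12_13 : (a ⊗[k] a) ⊗[k] (a ⊗[k] a) →ₗ[k] a ⊗[k] (a ⊗[k] a) :=
  (TensorProduct.map (brL k a) LinearMap.id) ∘ₗ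
    (TensorProduct.tensorTensorTensorComm k a a a a).toLinearMap

/-- `(f, g) ↦ [f^{12}, g^{23}]`: on pure tensors `(x ⊗ y, u ⊗ v) ↦ x ⊗ ⁅y,u⁆ ⊗ v`. -/
noncomputable def C12_23 : (a ⊗[k] a) ⊗[k] (a ⊗[k] a) →ₗ[k] a ⊗[k] (a ⊗[k] a) :=
  (TensorProduct.map LinearMap.id (TensorProduct.map (brL k a) LinearMap.id)) ∘ₗ
    (TensorProduct.congr (LinearEquiv.refl k a) (TensorProduct.assoc k a a a).symm).toLinearMap ∘ₗ
    (TensorProduct.assoc k a a (a ⊗[k] a)).toLinearMap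

/-- Membership in `Λ²a`: antisymmetry in `a ⊗ a`. -/
def IsAntisym (w : a ⊗[k] a) : Prop := TensorProduct.comm k a a w = -w

/-- The 1-cocycle condition for a cobracket. -/
def IsCocycle (d : a →ₗ[k] a ⊗[k] a) : Prop :=
  ∀ x y : a, d ⁅x, y⁆ = act k a x (d y) - act k a y (d x)

/-- The co-Jacobi identity. -/
def IsCoJacobi (d : a →ₗ[k] a ⊗[k] a) : Prop :=
  ∀ x : a, cycSum k a ((d13 k a d) (d x)) = 0

/-- `(a, d)` is a Lie bialgebra. -/
def IsLieCobracket (d : a →ₗ[k] a ⊗[k] a) : Prop :=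
  (∀ x, IsAntisym k a (d x)) ∧ IsCocycle k a d ∧ IsCoJacobi k a d

/-- The classical twist equation `(d ⊗ id)(f) + [f^{13}, f^{23}] + cyclic permutations = 0`. -/
def IsTwist (d : a →ₗ[k] a ⊗[k] a) (f : a ⊗[k] a) : Prop :=
  cycSum k a ((d13 k a d) f + C13_23 k a (f ⊗ₜ f)) = 0

/-- The twisted cobracket `δ + ad(f)`. -/
noncomputable def twistCobr (d : a →ₗ[k] a ⊗[k] a) (f : a ⊗[k] a) : a →ₗ[k] a ⊗[k] a :=
  d + adL k a f

section Helpers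
variable (k : Type) [Field k] (a : Type) [LieRing a] [LieAlgebra k a]

lemma cyc_apply (x y z : a) : cyc k a (x ⊗ₜ[k] (y ⊗ₜ[k] z)) = y ⊗ₜ[k] (z ⊗ₜ[k] x) := by
  simp [cyc]

lemma cyc_cyc_cyc (w : a ⊗[k] (a ⊗[k] a)) : cyc k a (cyc k a (cyc k a w)) = w := by
  have h : (cyc k a ∘ₗ cyc k a ∘ₗ cyc k a : a ⊗[k] (a ⊗[k] a) →ₗ[k] _) = LinearMap.id := by
    ext x y z
    simp [cyc_apply]
  exact DFunLike.congr_fun h w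

lemma cycSum_add (v w : a ⊗[k] (a ⊗[k] a)) :
    cycSum k a (v + w) = cycSum k a v + cycSum k a w := by
  simp only [cycSum, map_add]; abel

lemma cycSum_cyc (w : a ⊗[k] (a ⊗[k] a)) : cycSum k a (cyc k a w) = cycSum k a w := by
  simp only [cycSum, cyc_cyc_cyc]; abel

lemma d13_adL (F G : a ⊗[k] a) :
    d13 k a (adL k a F) G = C12_13 k a (F ⊗ₜ G) + C12_23 k a (F ⊗ₜ G) := by
  have hF : ∀ F F' G, d13 k a (adL k a (F + F')) G
      = d13 k a (adL k a F) G + d13 k a (adL k a F') G := by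
    intro F F' G
    have : adL k a (F + F') = adL k a F + adL k a F' := by
      simp [adL, map_add]; abel
    simp [d13, this, TensorProduct.map_add_left]
  induction F using TensorProduct.induction_on with
  | zero =>
      have : adL k a (0 : a ⊗[k] a) = 0 := by simp [adL]
      simp [this, d13, C12_13, C12_23]
  | add F F' ihF ihF' =>
      simp only [hF, ihF, ihF', TensorProduct.add_tmul, map_add]; abel
  | tmul x y =>
      induction G using TensorProduct.induction_on with
      | zero => simp
      | add G G' ihG ihG' =>
          simp only [map_add, TensorProduct.tmul_add, ihG, ihG']; abel
      | tmul u v =>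
          simp [d13, adL, act, C12_13, C12_23, br2, brL,
            TensorProduct.tmul_add, TensorProduct.add_tmul]
          rw [(lie_skew x u).symm, (lie_skew y u).symm]
          simp only [TensorProduct.neg_tmul, TensorProduct.tmul_neg, map_neg,
            TensorProduct.assoc_tmul]
          abel

lemma cycA (F G : a ⊗[k] a) :
    cyc k a (cyc k a (C13_23 k a (F ⊗ₜ G)))
      = C12_13 k a ((TensorProduct.comm k a a F) ⊗ₜ (TensorProduct.comm k a a G)) := by
  induction F using TensorProduct.induction_on with
  | zero => simp
  | add F F' ihF ihF' => simp only [TensorProduct.add_tmul, map_add, ihF, ihF']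
  | tmul x y =>
      induction G using TensorProduct.induction_on with
      | zero => simp
      | add G G' ihG ihG' => simp only [TensorProduct.tmul_add, map_add, ihG, ihG']
      | tmul u v =>
          simp [C13_23, C12_13, brL, br2, cyc_apply]

lemma cycB (F G : a ⊗[k] a) :
    cyc k a (C13_23 k a (G ⊗ₜ F))
      = - C12_23 k a (F ⊗ₜ (TensorProduct.comm k a a G)) := by
  induction F using TensorProduct.induction_on with
  | zero => simp
  | add F F' ihF ihF' => simp only [TensorProduct.add_tmul, TensorProduct.tmul_add, map_add, ihF, ihF']; abel
  | tmul x y =>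
      induction G using TensorProduct.induction_on with
      | zero => simp
      | add G G' ihG ihG' => simp only [TensorProduct.tmul_add, TensorProduct.add_tmul, map_add, ihG, ihG']; abel
      | tmul u v =>
          simp [C13_23, C12_23, brL, br2, cyc_apply]
          rw [(lie_skew v y).symm, TensorProduct.neg_tmul, TensorProduct.tmul_neg]

end Helpers

/-- in a `Γ`-Lie bialgebra, `(f_γ, Λ²(θ_γ)(f_{γ'}))` is a composition of twists. -/
theorem gamma_lie_bialgebra_composition_of_twists
    (k : Type) [Field k] [CharZero k] (a : Type) [LieRing a] [LieAlgebra k a]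
    (Γ : Type) [Group Γ]
    (d : a →ₗ[k] a ⊗[k] a) (hd : IsLieCobracket k a d)
    (θ : Γ → (a ≃ₗ⁅k⁆ a)) (hθ : ∀ γ γ' : Γ, ∀ x : a, θ (γ * γ') x = θ γ (θ γ' x))
    (f : Γ → a ⊗[k] a) (hfa : ∀ γ, IsAntisym k a (f γ))
    (ha : ∀ (γ : Γ) (x : a),
      TensorProduct.map (θ γ).toLieHom.toLinearMap (θ γ).toLieHom.toLinearMap
          (d ((θ γ).symm x)) = twistCobr k a d (f γ) x)
    (hb : ∀ γ γ' : Γ, f (γ * γ') = f γ +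
      TensorProduct.map (θ γ).toLieHom.toLinearMap (θ γ).toLieHom.toLinearMap (f γ'))
    (hc : ∀ γ : Γ, IsTwist k a d (f γ)) :
    ∀ γ γ' : Γ, IsTwist k a d (f γ) ∧
      IsTwist k a (twistCobr k a d (f γ))
        (TensorProduct.map (θ γ).toLieHom.toLinearMap (θ γ).toLieHom.toLinearMap (f γ')) := by
  intro γ γ'
  refine ⟨hc γ, ?_⟩
  set φ := (θ γ).toLieHom.toLinearMap with hφdef
  set F := f γ with hFdef
  set G := TensorProduct.map φ φ (f γ') with hGdef
  have hFas : TensorProduct.comm k a a F = -F := hfa γ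
  have hGas : TensorProduct.comm k a a G = -G := by
    have hcomm : (TensorProduct.comm k a a).toLinearMap ∘ₗ TensorProduct.map φ φ
        = TensorProduct.map φ φ ∘ₗ (TensorProduct.comm k a a).toLinearMap := by
      ext x y; simp
    have h' : TensorProduct.comm k a a (f γ') = -(f γ') := hfa γ'
    calc TensorProduct.comm k a a G
        = TensorProduct.map φ φ (TensorProduct.comm k a a (f γ'))
          := DFunLike.congr_fun hcomm (f γ')
      _ = -G := by rw [h', map_neg, hGdef]
  have h1 : cycSum k a (d13 k a d F) + cycSum k a (C13_23 k a (F ⊗ₜ F)) = 0 := by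
    have := hc γ
    unfold IsTwist at this
    rw [cycSum_add] at this
    exact this
  have h2 : cycSum k a (d13 k a d F) + cycSum k a (C13_23 k a (F ⊗ₜ F))
      + (cycSum k a (d13 k a d G) + cycSum k a (C13_23 k a (F ⊗ₜ G))
        + cycSum k a (C13_23 k a (G ⊗ₜ F)) + cycSum k a (C13_23 k a (G ⊗ₜ G))) = 0 := by
    have h2' := hc (γ * γ')
    rw [hb γ γ'] at h2'
    unfold IsTwist at h2'
    rw [← hFdef, ← hGdef] at h2'
    have hexp : d13 k a d (F + G) + C13_23 k a ((F + G) ⊗ₜ (F + G))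
        = (d13 k a d F + C13_23 k a (F ⊗ₜ F))
          + (d13 k a d G + C13_23 k a (F ⊗ₜ G) + C13_23 k a (G ⊗ₜ F)
            + C13_23 k a (G ⊗ₜ G)) := by
      simp only [map_add, TensorProduct.tmul_add, TensorProduct.add_tmul]
      abel
    rw [hexp] at h2'
    rw [cycSum_add, cycSum_add, cycSum_add, cycSum_add, cycSum_add] at h2'
    rw [← h2']
  have e3 : d13 k a (twistCobr k a d F) G
      = d13 k a d G + (C12_13 k a (F ⊗ₜ G) + C12_23 k a (F ⊗ₜ G)) := by
    have hadd : d13 k a (twistCobr k a d F) = d13 k a d + d13 k a (adL k a F) := by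
      unfold twistCobr d13
      rw [TensorProduct.map_add_left, LinearMap.comp_add]
    rw [hadd, LinearMap.add_apply, d13_adL]
  have eA : C12_13 k a (F ⊗ₜ G) = cyc k a (cyc k a (C13_23 k a (F ⊗ₜ G))) := by
    rw [cycA, hFas, hGas, TensorProduct.neg_tmul, TensorProduct.tmul_neg, neg_neg]
  have eB : C12_23 k a (F ⊗ₜ G) = cyc k a (C13_23 k a (G ⊗ₜ F)) := by
    rw [cycB, hGas, TensorProduct.tmul_neg, map_neg, neg_neg]
  unfold IsTwist
  rw [e3, eA, eB, cycSum_add, cycSum_add, cycSum_add, cycSum_cyc, cycSum_cyc, cycSum_cyc]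
  have hgoal : cycSum k a (d13 k a d G) + (cycSum k a (C13_23 k a (F ⊗ₜ G))
        + cycSum k a (C13_23 k a (G ⊗ₜ F))) + cycSum k a (C13_23 k a (G ⊗ₜ G))
      = (cycSum k a (d13 k a d F) + cycSum k a (C13_23 k a (F ⊗ₜ F))
        + (cycSum k a (d13 k a d G) + cycSum k a (C13_23 k a (F ⊗ₜ G))
          + cycSum k a (C13_23 k a (G ⊗ₜ F)) + cycSum k a (C13_23 k a (G ⊗ₜ G))))
        - (cycSum k a (d13 k a d F) + cycSum k a (C13_23 k a (F ⊗ₜ F))) := by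
    abel
  rw [hgoal, h2, h1]
  simp
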